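/- Let p be an odd prime, r = (p-1)/2, d | r with D := r/d odd, and ζ ∈ F_p^× a primitive 2r-th root of unity. Suppose ε ∈ {±1}^r satisfies ε_{dx+y} = (-1)^x ε_y for 0 ≤ x < D, 0 ≤ y < d. Then for every odd integer k, Σ_{n=0}^{r-1} ε_n ζ^{nk} = B_k · Σ_{x=0}^{D-1} (-ζ^d)^{xk}, where B_k = Σ_{y=0}^{d-1} ε_y ζ^{yk}; consequently Σ_{n=0}^{r-1} ε_n ζ^{nk} = D·B_k if D | k and equals 0 if D ∤ k. -/

import Mathlib

lemma sum_range_mul_decomp {M : Type*} [AddCommMonoid M] (d D : ℕ) (f : ℕ → M) :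
    ∑ n ∈ Finset.range (d * D), f n
      = ∑ x ∈ Finset.range D, ∑ y ∈ Finset.range d, f (d * x + y) := by
  induction D with
  | zero => simp
  | succ D ih =>
    rw [Nat.mul_succ, Finset.sum_range_add, ih, Finset.sum_range_succ]

/-- If `ε ∈ {±1}^r` is alternating periodic of period `d` with odd quotient
`D = r/d`, and `ζ` is a primitive `2r`-th root of unity in `F_p`, then for
every odd `k` the signed half sum factors as `B_k · Σ_x (-ζ^d)^{xk}`; it
equals `D·B_k` when `D ∣ k` and `0` otherwise. -/
theorem stmt_14 (p r d D : ℕ) [Fact p.Prime] (hp : p ≠ 2)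
    (hr : r = (p - 1) / 2) (hd : 0 < d) (hdr : d ∣ r) (hD : r = d * D)
    (hodd : Odd D) (ζ : ZMod p) (hζ : IsPrimitiveRoot ζ (2 * r))
    (ε : ℕ → ℤ) (hε : ∀ n < r, ε n = 1 ∨ ε n = -1)
    (halt : ∀ x < D, ∀ y < d, ε (d * x + y) = (-1 : ℤ) ^ x * ε y)
    (k : ℤ) (hk : Odd k) :
    (∑ n ∈ Finset.range r, (ε n : ZMod p) * ζ ^ ((n : ℤ) * k)) =
      (∑ y ∈ Finset.range d, (ε y : ZMod p) * ζ ^ ((y : ℤ) * k)) *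
        (∑ x ∈ Finset.range D, (-(ζ ^ d)) ^ ((x : ℤ) * k)) ∧
    ((D : ℤ) ∣ k →
      (∑ n ∈ Finset.range r, (ε n : ZMod p) * ζ ^ ((n : ℤ) * k)) =
        (D : ZMod p) * ∑ y ∈ Finset.range d, (ε y : ZMod p) * ζ ^ ((y : ℤ) * k)) ∧
    (¬ (D : ℤ) ∣ k →
      (∑ n ∈ Finset.range r, (ε n : ZMod p) * ζ ^ ((n : ℤ) * k)) = 0) := by
  have hprime : p.Prime := Fact.out
  have hp3 : 2 < p := lt_of_le_of_ne hprime.two_le (Ne.symm hp)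
  have hr0 : 0 < r := by subst hr; omega
  have hD0 : 0 < D := hodd.pos
  have hζ0 : ζ ≠ 0 := hζ.ne_zero (by omega)
  have hzr : ζ ^ r = -1 := by
    have h1 : (ζ ^ r) ^ 2 = 1 := by
      rw [← pow_mul, mul_comm r 2]; exact hζ.pow_eq_one
    have h2 : ζ ^ r ≠ 1 := hζ.pow_ne_one_of_pos_of_lt hr0.ne' (by omega)
    rcases sq_eq_one_iff.mp h1 with h | h
    · exact absurd h h2
    · exact h
  -- the "ratio" element
  set q : ZMod p := -(ζ ^ d) with hq
  have hqζ : q = ζ ^ (r + d) := by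
    rw [pow_add, hzr, hq]; ring
  have hq0 : q ≠ 0 := by
    rw [hq, neg_ne_zero]; exact pow_ne_zero _ hζ0
  -- the main factorization
  have key : ∑ n ∈ Finset.range r, (ε n : ZMod p) * ζ ^ ((n : ℤ) * k)
      = ∑ x ∈ Finset.range D, ∑ y ∈ Finset.range d,
          (ε y : ZMod p) * ζ ^ ((y : ℤ) * k) * q ^ ((x : ℤ) * k) := by
    rw [hD, sum_range_mul_decomp]
    refine Finset.sum_congr rfl fun x hx => Finset.sum_congr rfl fun y hy => ?_
    rw [halt x (Finset.mem_range.mp hx) y (Finset.mem_range.mp hy)]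
    have e1 : (((d * x + y : ℕ)) : ℤ) * k = (d : ℤ) * k * x + (y : ℤ) * k := by
      push_cast; ring
    have e2 : q ^ ((x : ℤ) * k) = (-1 : ZMod p) ^ x * (ζ ^ ((d : ℤ) * k)) ^ x := by
      have h1 : ((x : ℤ) * k) = k * x := by ring
      have h2 : q ^ (k : ℤ) = -(ζ ^ ((d : ℤ) * k)) := by
        rw [hq, hk.neg_zpow, ← zpow_natCast ζ d, ← zpow_mul]
      rw [h1, zpow_mul, zpow_natCast, h2, neg_pow]
    have e3 : ζ ^ ((d : ℤ) * k * x) = (ζ ^ ((d : ℤ) * k)) ^ x := by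
      rw [← zpow_natCast (ζ ^ ((d : ℤ) * k)) x, ← zpow_mul]
    rw [e1, zpow_add₀ hζ0, e2, e3]
    push_cast
    ring
  have part1 : ∑ n ∈ Finset.range r, (ε n : ZMod p) * ζ ^ ((n : ℤ) * k)
      = (∑ y ∈ Finset.range d, (ε y : ZMod p) * ζ ^ ((y : ℤ) * k)) *
        (∑ x ∈ Finset.range D, q ^ ((x : ℤ) * k)) := by
    rw [key, Finset.sum_comm, Finset.sum_mul_sum]
  -- the geometric ratio t
  set t : ZMod p := q ^ (k : ℤ) with ht
  have hSt : ∑ x ∈ Finset.range D, q ^ ((x : ℤ) * k) = ∑ x ∈ Finset.range D, t ^ x := by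
    refine Finset.sum_congr rfl fun x _ => ?_
    rw [ht, ← zpow_natCast (q ^ (k : ℤ)) x, ← zpow_mul, mul_comm]
  have hqD : q ^ (D : ℤ) = 1 := by
    rw [zpow_natCast, hq, neg_pow, hodd.neg_one_pow, ← pow_mul, ← hD, hzr]
    ring
  have htD : t ^ D = 1 := by
    rw [ht, ← zpow_natCast (q ^ (k : ℤ)) D, ← zpow_mul, mul_comm, zpow_mul, hqD, one_zpow]
  refine ⟨part1, fun hdvd => ?_, fun hndvd => ?_⟩
  · -- D ∣ k : t = 1
    obtain ⟨m, hm⟩ := hdvd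
    have ht1 : t = 1 := by
      rw [ht, hm, zpow_mul, hqD, one_zpow]
    rw [part1, hSt, ht1]
    simp [mul_comm]
  · -- D ∤ k : t ≠ 1
    have ht1 : t ≠ 1 := by
      intro h
      have hz1 : ζ ^ (((r : ℤ) + d) * k) = 1 := by
        rw [← h, ht, hqζ, ← zpow_natCast ζ (r + d), ← zpow_mul]
        push_cast; ring_nf
      have hdv : ((2 * r : ℕ) : ℤ) ∣ ((r : ℤ) + d) * k :=
        (hζ.zpow_eq_one_iff_dvd _).mp hz1
      obtain ⟨c, hc⟩ := hdv
      apply hndvd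
      have hd0 : (d : ℤ) ≠ 0 := by exact_mod_cast hd.ne'
      have hDk : ((D : ℤ) + 1) * k = 2 * D * c := by
        apply mul_left_cancel₀ hd0
        have : ((r : ℤ)) = d * D := by exact_mod_cast hD
        push_cast at hc
        rw [this] at hc
        linarith [hc]
      have hcop : IsCoprime (D : ℤ) ((D : ℤ) + 1) := by
        have : IsCoprime (D : ℤ) ((D + 1 : ℕ) : ℤ) :=
          Nat.isCoprime_iff_coprime.mpr (by simp [Nat.Coprime])
        push_cast at this
        exact this
      have : (D : ℤ) ∣ ((D : ℤ) + 1) * k := ⟨2 * c, by rw [hDk]; ring⟩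
      exact hcop.dvd_of_dvd_mul_left this
    rw [part1, hSt, geom_sum_eq ht1, htD]
    simp
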